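/- arXiv:1502.04139 — 3 statements merged into one kernel-verified Lean document; each statement's English description precedes it below -/
import Mathlib

section
/- Let Q ⊂ ℝ² be an axis-parallel square of side length ℓ(Q), let 1 ≤ p < 2, δ > 0, and let u ∈ W^{1,1}(Q) be a function that is absolutely continuous on almost all line segments in Q parallel to the coordinate axes. Define A₀ = {x ∈ Q : u(x) ≤ 0} and A₁ = {x ∈ Q : u(x) ≥ 1}. If max{H¹(π₁(A₀)), H¹(π₂(A₀))} ≥ δ·ℓ(Q) and max{H¹(π₁(A₁)), H¹(π₂(A₁))} ≥ δ·ℓ(Q), then ∫_Q |∇u|^p dx ≥ C(δ, p) · ℓ(Q)^{2-p} for some constant C(δ, p) > 0 depending only on δ and p. -/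
open Metric MeasureTheory Set
open scoped ENNReal

lemma seg' (f : ℝ → ℝ) (a b s t : ℝ) (hs : s ∈ Set.Icc a b) (ht : t ∈ Set.Icc a b) :
    ENNReal.ofReal |∫ r in s..t, f r| ≤ ∫⁻ r in Set.Icc a b, ENNReal.ofReal |f r| := by
  by_cases hInt : IntervalIntegrable f volume s t
  · have h1 : |∫ r in s..t, f r| ≤ ∫ r in Set.uIoc s t, |f r| := by
      simpa [Real.norm_eq_abs] using intervalIntegral.norm_integral_le_integral_norm_uIoc
        (f := f) (a := s) (b := t) (μ := volume)
    have hIntI : IntegrableOn (fun r => |f r|) (Set.uIoc s t) volume := by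
      simpa [Real.norm_eq_abs] using hInt.norm.def'
    have h2 : ENNReal.ofReal (∫ r in Set.uIoc s t, |f r|) =
        ∫⁻ r in Set.uIoc s t, ENNReal.ofReal |f r| := by
      refine ofReal_integral_eq_lintegral_ofReal hIntI ?_
      exact Filter.Eventually.of_forall fun r => abs_nonneg _
    have h3 : (∫⁻ r in Set.uIoc s t, ENNReal.ofReal |f r|) ≤
        ∫⁻ r in Set.Icc a b, ENNReal.ofReal |f r| := by
      refine lintegral_mono_set ?_
      exact (Set.uIoc_subset_uIcc).trans ((Set.ordConnected_Icc).uIcc_subset hs ht)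
    calc ENNReal.ofReal |∫ r in s..t, f r| ≤ ENNReal.ofReal (∫ r in Set.uIoc s t, |f r|) :=
          ENNReal.ofReal_le_ofReal h1
    _ = _ := h2
    _ ≤ _ := h3
  · rw [intervalIntegral.integral_undef hInt]
    simp

-- lower bound of lintegral via outer measure of a sublevel set
lemma lb {α : Type*} [MeasurableSpace α] (μ : Measure α) (F : α → ℝ≥0∞)
    (hF : AEMeasurable F μ) (E : Set α) (c : ℝ≥0∞) (hE : ∀ x ∈ E, c ≤ F x) :
    c * μ E ≤ ∫⁻ x, F x ∂μ := by
  set F' := hF.mk F with hF'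
  have hmeas : Measurable F' := hF.measurable_mk
  set S := {x | c ≤ F' x} with hS
  have hSm : MeasurableSet S := measurableSet_le measurable_const hmeas
  have hN : μ {x | F x ≠ F' x} = 0 := by
    exact ae_iff.mp hF.ae_eq_mk
  have hE' : μ E ≤ μ S := by
    have : E ⊆ S ∪ {x | F x ≠ F' x} := by
      intro x hx
      by_cases h : F x = F' x
      · left; simp only [S, Set.mem_setOf_eq, ← h]; exact hE x hx
      · right; exact h
    calc μ E ≤ μ (S ∪ {x | F x ≠ F' x}) := measure_mono this
    _ ≤ μ S + μ {x | F x ≠ F' x} := measure_union_le _ _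
    _ = μ S := by rw [hN, add_zero]
  calc c * μ E ≤ c * μ S := by exact mul_le_mul_right hE' c
  _ = ∫⁻ _ in S, c ∂μ := (setLIntegral_const S c).symm
  _ ≤ ∫⁻ x in S, F' x ∂μ := setLIntegral_mono' hSm (fun x hx => hx)
  _ ≤ ∫⁻ x, F' x ∂μ := setLIntegral_le_lintegral _ _
  _ = ∫⁻ x, F x ∂μ := lintegral_congr_ae hF.ae_eq_mk.symm

lemma holder {β : Type*} [MeasurableSpace β] (p : ℝ) (hp1 : 1 ≤ p) (ν : Measure β)
    (l : ℝ) (hl : 0 < l) (hν : ν Set.univ = ENNReal.ofReal l)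
    (f : β → ℝ≥0∞) (hf : AEMeasurable f ν) (c : ℝ) (hc : 0 < c)
    (hcf : ENNReal.ofReal c ≤ ∫⁻ y, f y ∂ν) :
    ENNReal.ofReal (c ^ p * l ^ (1 - p)) ≤ ∫⁻ y, (f y) ^ p ∂ν := by
  have hp0 : (0:ℝ) < p := lt_of_lt_of_le one_pos hp1
  rcases eq_or_lt_of_le hp1 with hp | hp
  · simp only [← hp, Real.rpow_one, ENNReal.rpow_one, sub_self, Real.rpow_zero, mul_one]
    exact hcf
  · set q := Real.conjExponent p with hq
    have hpq : Real.HolderConjugate p q := Real.HolderConjugate.conjExponent hp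
    set L := ∫⁻ y, f y ^ p ∂ν with hL
    have hH : (∫⁻ y, f y ∂ν) ≤ L ^ (1/p) * (ENNReal.ofReal l) ^ (1/q) := by
      have := ENNReal.lintegral_mul_le_Lp_mul_Lq ν hpq hf
        (aemeasurable_const (b := (1:ℝ≥0∞)))
      simpa [lintegral_const, hν, ENNReal.one_rpow] using this
    set D := (ENNReal.ofReal l) ^ (1/q) with hD
    have hl0 : ENNReal.ofReal l ≠ 0 := by simp [hl]
    have hD0 : D ≠ 0 := by
      simp only [hD]
      exact (ENNReal.rpow_pos (lt_of_le_of_ne (zero_le) (Ne.symm hl0)) ENNReal.ofReal_ne_top).ne'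
    have hDt : D ≠ ⊤ := ENNReal.rpow_ne_top_of_nonneg (le_of_lt (one_div_pos.mpr hpq.symm.pos)) ENNReal.ofReal_ne_top
    have h1 : ENNReal.ofReal c / D ≤ L ^ (1/p) := by
      have h := ENNReal.div_le_div_right (hcf.trans hH) D
      rwa [mul_div_assoc, ENNReal.div_self hD0 hDt, mul_one] at h
    have h2 : (ENNReal.ofReal c / D) ^ p ≤ L := by
      have h := ENNReal.rpow_le_rpow h1 hp0.le
      rwa [← ENNReal.rpow_mul, one_div_mul_cancel hp0.ne', ENNReal.rpow_one] at h
    refine le_trans (le_of_eq ?_) h2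
    have hqp : (1/q) * p = p - 1 := by
      have h1q : 1/q = 1 - 1/p := by
        have := hpq.inv_add_inv_eq_one
        rw [one_div, one_div]; linarith
      rw [h1q]; field_simp
    have hDp : D ^ p = ENNReal.ofReal (l ^ (p-1)) := by
      rw [hD, ← ENNReal.rpow_mul, hqp, ENNReal.ofReal_rpow_of_pos hl]
    rw [ENNReal.div_rpow_of_nonneg _ _ hp0.le, ENNReal.ofReal_rpow_of_pos hc, hDp,
      ← ENNReal.ofReal_div_of_pos (Real.rpow_pos_of_pos hl _)]
    congr 1
    rw [div_eq_mul_inv, ← Real.rpow_neg hl.le]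
    ring_nf

lemma good1 {α β : Type*} [MeasurableSpace α] [MeasurableSpace β]
    (μ : Measure α) (ν : Measure β) [SFinite ν]
    (G : α × β → ℝ≥0∞) (hG : AEMeasurable G (μ.prod ν))
    (hfin : ∫⁻ z, G z ∂(μ.prod ν) ≠ ⊤) :
    ∀ᵐ x ∂μ, AEMeasurable (fun y => G (x, y)) ν ∧ (∫⁻ y, G (x, y) ∂ν) < ⊤ := by
  set G' := hG.mk G with hG'
  have hmeas : Measurable G' := hG.measurable_mk
  have hae : ∀ᵐ x ∂μ, ∀ᵐ y ∂ν, G (x, y) = G' (x, y) :=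
    Measure.ae_ae_of_ae_prod hG.ae_eq_mk
  have hfin' : ∫⁻ x, (∫⁻ y, G' (x, y) ∂ν) ∂μ ≠ ⊤ := by
    rw [← MeasureTheory.lintegral_prod _ hmeas.aemeasurable]
    rwa [lintegral_congr_ae hG.ae_eq_mk] at hfin
  have hlt : ∀ᵐ x ∂μ, (∫⁻ y, G' (x, y) ∂ν) < ⊤ :=
    ae_lt_top (hmeas.lintegral_prod_right') hfin'
  filter_upwards [hae, hlt] with x hx hx'
  have hsl : AEMeasurable (fun y => G (x, y)) ν :=
    ⟨fun y => G' (x, y), hmeas.comp (measurable_prodMk_left), hx⟩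
  refine ⟨hsl, ?_⟩
  rwa [lintegral_congr_ae hx]

lemma endgame {α β : Type*} [MeasurableSpace α] [MeasurableSpace β]
    (μ : Measure α) (ν : Measure β) [SFinite μ] [SFinite ν]
    (p : ℝ) (hp1 : 1 ≤ p) (l : ℝ) (hl : 0 < l) (hν : ν Set.univ = ENNReal.ofReal l)
    (G : α × β → ℝ≥0∞) (hG : AEMeasurable G (μ.prod ν))
    (c m : ℝ) (hc : 0 < c) (E : Set α) (hEm : ENNReal.ofReal m ≤ μ E)
    (hE : ∀ x ∈ E, AEMeasurable (fun y => G (x, y)) ν ∧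
      ENNReal.ofReal c ≤ ∫⁻ y, G (x, y) ∂ν) :
    ENNReal.ofReal (c ^ p * l ^ (1 - p)) * ENNReal.ofReal m ≤
      ∫⁻ z, (G z) ^ p ∂(μ.prod ν) := by
  have hGp : AEMeasurable (fun z => (G z) ^ p) (μ.prod ν) :=
    (ENNReal.continuous_rpow_const.measurable).comp_aemeasurable hG
  rw [MeasureTheory.lintegral_prod _ hGp]
  -- F x = ∫⁻ y, G (x,y) ^ p ∂ν is AEMeasurable
  set G' := hG.mk G with hG'def
  have hmeas : Measurable G' := hG.measurable_mk
  have hae : ∀ᵐ x ∂μ, ∀ᵐ y ∂ν, G (x, y) = G' (x, y) :=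
    Measure.ae_ae_of_ae_prod hG.ae_eq_mk
  have hFmeas : AEMeasurable (fun x => ∫⁻ y, G (x, y) ^ p ∂ν) μ := by
    refine ⟨fun x => ∫⁻ y, G' (x, y) ^ p ∂ν, ?_, ?_⟩
    · exact Measurable.lintegral_prod_right'
        ((ENNReal.continuous_rpow_const.measurable).comp hmeas)
    · filter_upwards [hae] with x hx
      exact lintegral_congr_ae (hx.mono fun y hy => by simp only [hy])
  have key : ∀ x ∈ E, ENNReal.ofReal (c ^ p * l ^ (1 - p)) ≤ ∫⁻ y, G (x, y) ^ p ∂ν := by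
    intro x hx
    exact holder p hp1 ν l hl hν _ (hE x hx).1 c hc (hE x hx).2
  calc ENNReal.ofReal (c ^ p * l ^ (1 - p)) * ENNReal.ofReal m
      ≤ ENNReal.ofReal (c ^ p * l ^ (1 - p)) * μ E := mul_le_mul_right hEm _
  _ ≤ _ := lb μ _ hFmeas E _ key

section
variable {α β : Type*} [MeasurableSpace α] [MeasurableSpace β]
  (μ : Measure α) (ν : Measure β) [SFinite μ] [SFinite ν]


lemma endgame_symm (p : ℝ) (hp1 : 1 ≤ p) (l : ℝ) (hl : 0 < l)
    (hμu : μ Set.univ = ENNReal.ofReal l)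
    (G : α × β → ℝ≥0∞) (hG : AEMeasurable G (μ.prod ν))
    (c m : ℝ) (hc : 0 < c) (E : Set β) (hEm : ENNReal.ofReal m ≤ ν E)
    (hE : ∀ y ∈ E, AEMeasurable (fun x => G (x, y)) μ ∧
      ENNReal.ofReal c ≤ ∫⁻ x, G (x, y) ∂μ) :
    ENNReal.ofReal (c ^ p * l ^ (1 - p)) * ENNReal.ofReal m ≤
      ∫⁻ z, (G z) ^ p ∂(μ.prod ν) := by
  have hGs : AEMeasurable (fun z => G (Prod.swap z)) (ν.prod μ) :=
    hG.comp_quasiMeasurePreserving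
      (Measure.measurePreserving_swap).quasiMeasurePreserving
  have h := endgame ν μ p hp1 l hl hμu (fun z => G (Prod.swap z)) hGs c m hc E hEm hE
  rw [← MeasureTheory.lintegral_prod_swap (fun z => G z ^ p)]
  exact h
end

section
variable {γ : Type*} [MeasurableSpace γ]

lemma meas_inter_ae (m : Measure γ) (A : Set γ) {P : γ → Prop} (h : ∀ᵐ x ∂m, P x) :
    m A ≤ m (A ∩ {x | P x}) := by
  have hsub : A ⊆ (A ∩ {x | P x}) ∪ {x | ¬ P x} := by
    intro x hx
    by_cases hp : P x
    · exact Or.inl ⟨hx, hp⟩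
    · exact Or.inr hp
  have h0 : m {x | ¬ P x} = 0 := by
    simpa [ae_iff] using h
  calc m A ≤ m ((A ∩ {x | P x}) ∪ {x | ¬ P x}) := measure_mono hsub
  _ ≤ m (A ∩ {x | P x}) + m {x | ¬ P x} := measure_union_le _ _
  _ = m (A ∩ {x | P x}) := by rw [h0, add_zero]

end

section
variable {α β : Type*} [MeasurableSpace α] [MeasurableSpace β]

lemma master_left (μ : Measure α) (ν : Measure β) [SFinite μ] [SFinite ν]
    (p δ l : ℝ) (hp1 : 1 ≤ p) (hδ : 0 < δ) (hδ1 : δ ≤ 1) (hl : 0 < l)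
    (hμu : μ Set.univ = ENNReal.ofReal l) (hνu : ν Set.univ = ENNReal.ofReal l)
    (U : α → β → ℝ) (G : α × β → ℝ≥0∞)
    (hG : AEMeasurable G (μ.prod ν)) (hGfin : ∫⁻ z, G z ∂(μ.prod ν) ≠ ⊤)
    (Iset : Set α) (Jset : Set β)
    (hIae : ∀ᵐ x ∂μ, x ∈ Iset) (hJae : ∀ᵐ y ∂ν, y ∈ Jset)
    (Hv : ∀ᵐ x ∂μ, ∀ y ∈ Jset, ∀ y' ∈ Jset,
      ENNReal.ofReal |U x y' - U x y| ≤ ∫⁻ w, G (x, w) ∂ν)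
    (Hh : ∀ᵐ y ∂ν, ∀ x ∈ Iset, ∀ x' ∈ Iset,
      ENNReal.ofReal |U x' y - U x y| ≤ ∫⁻ w, G (w, y) ∂μ)
    (h₀ : ∃ S, ENNReal.ofReal (δ * l) ≤ μ S ∧
      ∀ x ∈ S, x ∈ Iset ∧ ∃ y ∈ Jset, U x y ≤ 0)
    (h₁ : (∃ S, ENNReal.ofReal (δ * l) ≤ μ S ∧
            ∀ x ∈ S, x ∈ Iset ∧ ∃ y ∈ Jset, 1 ≤ U x y) ∨
          (∃ T, ENNReal.ofReal (δ * l) ≤ ν T ∧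
            ∀ y ∈ T, y ∈ Jset ∧ ∃ x ∈ Iset, 1 ≤ U x y)) :
    ENNReal.ofReal ((1/3 : ℝ) ^ p * l ^ (1 - p)) * ENNReal.ofReal (δ * l) ≤
      ∫⁻ z, (G z) ^ p ∂(μ.prod ν) := by
  classical
  set V : α → ℝ≥0∞ := fun x => ∫⁻ w, G (x, w) ∂ν with hV
  set HY : β → ℝ≥0∞ := fun y => ∫⁻ w, G (w, y) ∂μ with hHY
  have hc3 : (0:ℝ) < 1/3 := by norm_num
  -- good sets
  set Pa : α → Prop := fun x =>
    (∀ y ∈ Jset, ∀ y' ∈ Jset, ENNReal.ofReal |U x y' - U x y| ≤ V x) ∧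
    AEMeasurable (fun y => G (x, y)) ν ∧ x ∈ Iset with hPa_def
  have hPa : ∀ᵐ x ∂μ, Pa x := by
    filter_upwards [Hv, good1 μ ν G hG hGfin, hIae] with x h1 h2 h3
    exact ⟨h1, h2.1, h3⟩
  set Pb : β → Prop := fun y =>
    (∀ x ∈ Iset, ∀ x' ∈ Iset, ENNReal.ofReal |U x' y - U x y| ≤ HY y) ∧
    AEMeasurable (fun x => G (x, y)) μ ∧ y ∈ Jset with hPb_def
  have hPb : ∀ᵐ y ∂ν, Pb y := by
    have hGs : AEMeasurable (fun z => G (Prod.swap z)) (ν.prod μ) :=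
      hG.comp_quasiMeasurePreserving
        (Measure.measurePreserving_swap).quasiMeasurePreserving
    have hfin' : ∫⁻ z, G (Prod.swap z) ∂(ν.prod μ) ≠ ⊤ := by
      rw [show (fun z : β × α => G (Prod.swap z)) = fun z : β × α => G z.swap from rfl,
        MeasureTheory.lintegral_prod_swap G]
      exact hGfin
    filter_upwards [Hh, good1 ν μ (fun z => G (Prod.swap z)) hGs hfin', hJae] with y h1 h2 h3
    exact ⟨h1, h2.1, h3⟩
  obtain ⟨S₀, hS₀m, hS₀⟩ := h₀
  set S₀' := S₀ ∩ {x | Pa x} with hS₀'def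
  have hS₀'m : ENNReal.ofReal (δ * l) ≤ μ S₀' := hS₀m.trans (meas_inter_ae μ S₀ hPa)
  -- the measure of the whole good set on the β side
  have hδl_l : ENNReal.ofReal (δ * l) ≤ ENNReal.ofReal l := by
    apply ENNReal.ofReal_le_ofReal; nlinarith
  -- crossing inequality, 2-leg version
  have cross2 : ∀ x₀ y, Pa x₀ → Pb y → x₀ ∈ Iset →
      (∃ y₀ ∈ Jset, U x₀ y₀ ≤ 0) → y ∈ Jset →
      (∃ x₁ ∈ Iset, 1 ≤ U x₁ y) →
      ENNReal.ofReal 1 ≤ V x₀ + HY y := by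
    intro x₀ y hPax hPby hx₀I ⟨y₀, hy₀J, hy₀U⟩ hyJ ⟨x₁, hx₁I, hx₁U⟩
    have h1 : (1:ℝ) ≤ |U x₀ y - U x₀ y₀| + |U x₁ y - U x₀ y| := by
      have : (1:ℝ) ≤ U x₁ y - U x₀ y₀ := by linarith
      calc (1:ℝ) ≤ U x₁ y - U x₀ y₀ := this
      _ = (U x₀ y - U x₀ y₀) + (U x₁ y - U x₀ y) := by ring
      _ ≤ |U x₀ y - U x₀ y₀| + |U x₁ y - U x₀ y| :=
          add_le_add (le_abs_self _) (le_abs_self _)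
    calc ENNReal.ofReal 1 ≤ ENNReal.ofReal (|U x₀ y - U x₀ y₀| + |U x₁ y - U x₀ y|) :=
          ENNReal.ofReal_le_ofReal h1
    _ = ENNReal.ofReal |U x₀ y - U x₀ y₀| + ENNReal.ofReal |U x₁ y - U x₀ y| :=
          ENNReal.ofReal_add (abs_nonneg _) (abs_nonneg _)
    _ ≤ V x₀ + HY y := add_le_add (hPax.1 y₀ hy₀J y hyJ) (hPby.1 x₀ hx₀I x₁ hx₁I)
  -- crossing inequality, 3-leg version
  have cross3 : ∀ x₀ y x', Pa x₀ → Pb y → Pa x' → x₀ ∈ Iset → x' ∈ Iset → y ∈ Jset →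
      (∃ y₀ ∈ Jset, U x₀ y₀ ≤ 0) →
      (∃ y₁ ∈ Jset, 1 ≤ U x' y₁) →
      ENNReal.ofReal 1 ≤ V x₀ + HY y + V x' := by
    intro x₀ y x' hPax hPby hPax' hx₀I hx'I hyJ ⟨y₀, hy₀J, hy₀U⟩ ⟨y₁, hy₁J, hy₁U⟩
    have h1 : (1:ℝ) ≤ |U x₀ y - U x₀ y₀| + |U x' y - U x₀ y| + |U x' y₁ - U x' y| := by
      have : (1:ℝ) ≤ U x' y₁ - U x₀ y₀ := by linarith
      calc (1:ℝ) ≤ U x' y₁ - U x₀ y₀ := this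
      _ = (U x₀ y - U x₀ y₀) + (U x' y - U x₀ y) + (U x' y₁ - U x' y) := by ring
      _ ≤ _ := by
          have := le_abs_self (U x₀ y - U x₀ y₀)
          have := le_abs_self (U x' y - U x₀ y)
          have := le_abs_self (U x' y₁ - U x' y)
          linarith
    calc ENNReal.ofReal 1
        ≤ ENNReal.ofReal (|U x₀ y - U x₀ y₀| + |U x' y - U x₀ y| + |U x' y₁ - U x' y|) :=
          ENNReal.ofReal_le_ofReal h1
    _ = ENNReal.ofReal |U x₀ y - U x₀ y₀| + ENNReal.ofReal |U x' y - U x₀ y|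
          + ENNReal.ofReal |U x' y₁ - U x' y| := by
          rw [ENNReal.ofReal_add (by positivity) (abs_nonneg _),
            ENNReal.ofReal_add (abs_nonneg _) (abs_nonneg _)]
    _ ≤ V x₀ + HY y + V x' :=
          add_le_add (add_le_add (hPax.1 y₀ hy₀J y hyJ) (hPby.1 x₀ hx₀I x' hx'I))
            (hPax'.1 y hyJ y₁ hy₁J)
  have third_sum : ENNReal.ofReal (1/3 : ℝ) + ENNReal.ofReal (1/3 : ℝ)
      + ENNReal.ofReal (1/3 : ℝ) = ENNReal.ofReal 1 := by
    rw [← ENNReal.ofReal_add (by norm_num) (by norm_num),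
      ← ENNReal.ofReal_add (by norm_num) (by norm_num)]
    norm_num
  rcases h₁ with ⟨S₁, hS₁m, hS₁⟩ | ⟨T₁, hT₁m, hT₁⟩
  · -- both vertical-rich : trichotomy
    set S₁' := S₁ ∩ {x | Pa x} with hS₁'def
    have hS₁'m : ENNReal.ofReal (δ * l) ≤ μ S₁' := hS₁m.trans (meas_inter_ae μ S₁ hPa)
    by_cases hcase1 : ∀ x ∈ S₀', ENNReal.ofReal (1/3 : ℝ) ≤ V x
    · exact endgame μ ν p hp1 l hl hνu G hG (1/3) (δ * l) hc3 S₀' hS₀'m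
        (fun x hx => ⟨hx.2.2.1, hcase1 x hx⟩)
    · push_neg at hcase1
      obtain ⟨x₀, hx₀S, hx₀V⟩ := hcase1
      by_cases hcase2 : ∀ y ∈ {y | Pb y}, ENNReal.ofReal (1/3 : ℝ) ≤ HY y
      · refine endgame_symm μ ν p hp1 l hl hμu G hG (1/3) (δ * l) hc3 {y | Pb y} ?_
          (fun y hy => ⟨hy.2.1, hcase2 y hy⟩)
        calc ENNReal.ofReal (δ * l) ≤ ENNReal.ofReal l := hδl_l
        _ = ν Set.univ := hνu.symm
        _ ≤ ν (Set.univ ∩ {y | Pb y}) := meas_inter_ae ν Set.univ hPb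
        _ = ν {y | Pb y} := by rw [Set.univ_inter]
      · push_neg at hcase2
        obtain ⟨y, hyPb, hyH⟩ := hcase2
        have claim : ∀ x' ∈ S₁', ENNReal.ofReal (1/3 : ℝ) ≤ V x' := by
          intro x' hx'
          by_contra hVx'
          rw [not_le] at hVx'
          have hx₀Pa : Pa x₀ := hx₀S.2
          have hx'Pa : Pa x' := hx'.2
          have h3 := cross3 x₀ y x' hx₀Pa hyPb hx'Pa (hS₀ x₀ hx₀S.1).1 (hS₁ x' hx'.1).1
            hyPb.2.2 (hS₀ x₀ hx₀S.1).2 (hS₁ x' hx'.1).2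
          have hlt : V x₀ + HY y + V x' < ENNReal.ofReal 1 := by
            rw [← third_sum]
            exact ENNReal.add_lt_add (ENNReal.add_lt_add hx₀V hyH) hVx'
          exact absurd h3 (not_le.mpr hlt)
        exact endgame μ ν p hp1 l hl hνu G hG (1/3) (δ * l) hc3 S₁' hS₁'m
          (fun x hx => ⟨hx.2.2.1, claim x hx⟩)
  · -- A₁ horizontal-rich : dichotomy
    set T₁' := T₁ ∩ {y | Pb y} with hT₁'def
    have hT₁'m : ENNReal.ofReal (δ * l) ≤ ν T₁' := hT₁m.trans (meas_inter_ae ν T₁ hPb)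
    by_cases hcase1 : ∀ x ∈ S₀', ENNReal.ofReal (1/3 : ℝ) ≤ V x
    · exact endgame μ ν p hp1 l hl hνu G hG (1/3) (δ * l) hc3 S₀' hS₀'m
        (fun x hx => ⟨hx.2.2.1, hcase1 x hx⟩)
    · push_neg at hcase1
      obtain ⟨x₀, hx₀S, hx₀V⟩ := hcase1
      have claim : ∀ y ∈ T₁', ENNReal.ofReal (1/3 : ℝ) ≤ HY y := by
        intro y hy
        by_contra hHy
        rw [not_le] at hHy
        have h2 := cross2 x₀ y hx₀S.2 hy.2 (hS₀ x₀ hx₀S.1).1 (hS₀ x₀ hx₀S.1).2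
          (hT₁ y hy.1).1 (hT₁ y hy.1).2
        have hlt : V x₀ + HY y < ENNReal.ofReal 1 := by
          have h23 : ENNReal.ofReal (1/3 : ℝ) + ENNReal.ofReal (1/3 : ℝ) < ENNReal.ofReal 1 := by
            rw [← ENNReal.ofReal_add (by norm_num) (by norm_num)]
            exact ENNReal.ofReal_lt_ofReal_iff (by norm_num) |>.mpr (by norm_num)
          exact lt_trans (ENNReal.add_lt_add hx₀V hHy) h23
        exact absurd h2 (not_le.mpr hlt)
      exact endgame_symm μ ν p hp1 l hl hμu G hG (1/3) (δ * l) hc3 T₁' hT₁'m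
        (fun y hy => ⟨hy.2.2.1, claim y hy⟩)
end

/-- Lower bound for the `p`-energy of a Sobolev function on a square whose
level sets `{u ≤ 0}` and `{u ≥ 1}` both have large projections onto a coordinate axis. -/
theorem stmt1 (p δ : ℝ) (hp1 : 1 ≤ p) (hp2 : p < 2) (hδ : 0 < δ) :
    ∃ C : ℝ, 0 < C ∧
      ∀ (a₁ a₂ l : ℝ) (u : ℝ × ℝ → ℝ) (g : ℝ × ℝ → ℝ × ℝ), 0 < l →
        IntegrableOn u (Set.Icc a₁ (a₁ + l) ×ˢ Set.Icc a₂ (a₂ + l)) volume →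
        IntegrableOn (fun x => ‖g x‖) (Set.Icc a₁ (a₁ + l) ×ˢ Set.Icc a₂ (a₂ + l)) volume →
        (∀ᵐ x₂ ∂(volume.restrict (Set.Icc a₂ (a₂ + l))),
          ∀ s ∈ Set.Icc a₁ (a₁ + l), ∀ t ∈ Set.Icc a₁ (a₁ + l),
            u (t, x₂) - u (s, x₂) = ∫ r in s..t, (g (r, x₂)).1) →
        (∀ᵐ x₁ ∂(volume.restrict (Set.Icc a₁ (a₁ + l))),
          ∀ s ∈ Set.Icc a₂ (a₂ + l), ∀ t ∈ Set.Icc a₂ (a₂ + l),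
            u (x₁, t) - u (x₁, s) = ∫ r in s..t, (g (x₁, r)).2) →
        ENNReal.ofReal (δ * l) ≤
          max (μH[1] (Prod.fst '' {x | x ∈ Set.Icc a₁ (a₁ + l) ×ˢ Set.Icc a₂ (a₂ + l) ∧ u x ≤ 0}))
              (μH[1] (Prod.snd '' {x | x ∈ Set.Icc a₁ (a₁ + l) ×ˢ Set.Icc a₂ (a₂ + l) ∧ u x ≤ 0})) →
        ENNReal.ofReal (δ * l) ≤
          max (μH[1] (Prod.fst '' {x | x ∈ Set.Icc a₁ (a₁ + l) ×ˢ Set.Icc a₂ (a₂ + l) ∧ 1 ≤ u x}))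
              (μH[1] (Prod.snd '' {x | x ∈ Set.Icc a₁ (a₁ + l) ×ˢ Set.Icc a₂ (a₂ + l) ∧ 1 ≤ u x})) →
        ENNReal.ofReal (C * l ^ (2 - p)) ≤
          ∫⁻ x in Set.Icc a₁ (a₁ + l) ×ˢ Set.Icc a₂ (a₂ + l), ENNReal.ofReal (‖g x‖ ^ p) := by
  classical
  refine ⟨min δ 1 * (1/3 : ℝ) ^ p, ?_, ?_⟩
  · exact mul_pos (lt_min hδ one_pos) (Real.rpow_pos_of_pos (by norm_num) p)
  intro a₁ a₂ l u g hl hu hg FTCh FTCv hmax₀ hmax₁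
  set I₁ := Set.Icc a₁ (a₁ + l) with hI₁
  set I₂ := Set.Icc a₂ (a₂ + l) with hI₂
  set Q := I₁ ×ˢ I₂ with hQ
  have hsubfst : ∀ (A : Set (ℝ × ℝ)), A ⊆ Q → Prod.fst '' A ⊆ I₁ := by
    rintro A hA _ ⟨z, hz, rfl⟩; exact (hA hz).1
  have hsubsnd : ∀ (A : Set (ℝ × ℝ)), A ⊆ Q → Prod.snd '' A ⊆ I₂ := by
    rintro A hA _ ⟨z, hz, rfl⟩; exact (hA hz).2
  have hvolI₁ : volume I₁ = ENNReal.ofReal l := by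
    rw [hI₁, Real.volume_Icc]; congr 1; ring
  have hvolI₂ : volume I₂ = ENNReal.ofReal l := by
    rw [hI₂, Real.volume_Icc]; congr 1; ring
  by_cases hδ1 : δ ≤ 1
  swap
  · push_neg at hδ1
    exfalso
    have hbound : ∀ (A : Set (ℝ × ℝ)), A ⊆ Q →
        max (μH[1] (Prod.fst '' A)) (μH[1] (Prod.snd '' A)) < ENNReal.ofReal (δ * l) := by
      intro A hA
      have h1 : μH[1] (Prod.fst '' A) ≤ ENNReal.ofReal l := by
        rw [MeasureTheory.hausdorffMeasure_real]
        exact le_trans (measure_mono (hsubfst A hA)) (le_of_eq hvolI₁)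
      have h2 : μH[1] (Prod.snd '' A) ≤ ENNReal.ofReal l := by
        rw [MeasureTheory.hausdorffMeasure_real]
        exact le_trans (measure_mono (hsubsnd A hA)) (le_of_eq hvolI₂)
      have hlt : ENNReal.ofReal l < ENNReal.ofReal (δ * l) :=
        (ENNReal.ofReal_lt_ofReal_iff (by nlinarith)).mpr (by nlinarith)
      exact max_lt (lt_of_le_of_lt h1 hlt) (lt_of_le_of_lt h2 hlt)
    exact absurd hmax₀ (not_le.mpr (hbound _ (fun z hz => hz.1)))
  -- main case
  set μ := volume.restrict I₁ with hμdef
  set ν := volume.restrict I₂ with hνdef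
  have hμu : μ Set.univ = ENNReal.ofReal l := by
    rw [hμdef, Measure.restrict_apply_univ]; exact hvolI₁
  have hνu : ν Set.univ = ENNReal.ofReal l := by
    rw [hνdef, Measure.restrict_apply_univ]; exact hvolI₂
  set G : ℝ × ℝ → ℝ≥0∞ := fun z => ENNReal.ofReal ‖g z‖ with hGdef
  have hQmeas : μ.prod ν = volume.restrict Q := by
    rw [hμdef, hνdef, Measure.prod_restrict, ← Measure.volume_eq_prod]
  have hG : AEMeasurable G (μ.prod ν) := by
    rw [hQmeas]
    exact ENNReal.measurable_ofReal.comp_aemeasurable hg.aemeasurable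
  have hGfin : ∫⁻ z, G z ∂(μ.prod ν) ≠ ⊤ := by
    rw [hQmeas, hGdef, ← ofReal_integral_eq_lintegral_ofReal hg
      (Filter.Eventually.of_forall fun x => norm_nonneg _)]
    exact ENNReal.ofReal_ne_top
  -- digested FTC bounds
  have Hv : ∀ᵐ x ∂μ, ∀ y ∈ I₂, ∀ y' ∈ I₂,
      ENNReal.ofReal |u (x, y') - u (x, y)| ≤ ∫⁻ w, G (x, w) ∂ν := by
    filter_upwards [FTCv] with x hx
    intro y hy y' hy'
    rw [hx y hy y' hy']
    refine le_trans (seg' (fun r => (g (x, r)).2) a₂ (a₂ + l) y y' hy hy') ?_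
    refine lintegral_mono fun r => ENNReal.ofReal_le_ofReal ?_
    calc |(g (x, r)).2| = ‖(g (x, r)).2‖ := (Real.norm_eq_abs _).symm
    _ ≤ ‖g (x, r)‖ := norm_snd_le _
  have Hh : ∀ᵐ y ∂ν, ∀ x ∈ I₁, ∀ x' ∈ I₁,
      ENNReal.ofReal |u (x', y) - u (x, y)| ≤ ∫⁻ w, G (w, y) ∂μ := by
    filter_upwards [FTCh] with y hy
    intro x hx x' hx'
    rw [hy x hx x' hx']
    refine le_trans (seg' (fun r => (g (r, y)).1) a₁ (a₁ + l) x x' hx hx') ?_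
    refine lintegral_mono fun r => ENNReal.ofReal_le_ofReal ?_
    calc |(g (r, y)).1| = ‖(g (r, y)).1‖ := (Real.norm_eq_abs _).symm
    _ ≤ ‖g (r, y)‖ := norm_fst_le _
  -- projections as rich sets
  have hproj_fst : ∀ (c : ℝ × ℝ → Prop), ENNReal.ofReal (δ * l) ≤
      μH[1] (Prod.fst '' {x | x ∈ Q ∧ c x}) →
      ∃ S, ENNReal.ofReal (δ * l) ≤ μ S ∧ ∀ x ∈ S, x ∈ I₁ ∧ ∃ y ∈ I₂, c (x, y) := by
    intro c h
    refine ⟨Prod.fst '' {x | x ∈ Q ∧ c x}, ?_, ?_⟩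
    · rw [MeasureTheory.hausdorffMeasure_real] at h
      rw [hμdef, Measure.restrict_apply' measurableSet_Icc,
        Set.inter_eq_self_of_subset_left (hsubfst _ (fun z hz => hz.1))]
      exact h
    · rintro _ ⟨z, ⟨hzQ, hzc⟩, rfl⟩
      exact ⟨hzQ.1, z.2, hzQ.2, by rwa [Prod.mk.eta]⟩
  have hproj_snd : ∀ (c : ℝ × ℝ → Prop), ENNReal.ofReal (δ * l) ≤
      μH[1] (Prod.snd '' {x | x ∈ Q ∧ c x}) →
      ∃ T, ENNReal.ofReal (δ * l) ≤ ν T ∧ ∀ y ∈ T, y ∈ I₂ ∧ ∃ x ∈ I₁, c (x, y) := by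
    intro c h
    refine ⟨Prod.snd '' {x | x ∈ Q ∧ c x}, ?_, ?_⟩
    · rw [MeasureTheory.hausdorffMeasure_real] at h
      rw [hνdef, Measure.restrict_apply' measurableSet_Icc,
        Set.inter_eq_self_of_subset_left (hsubsnd _ (fun z hz => hz.1))]
      exact h
    · rintro _ ⟨z, ⟨hzQ, hzc⟩, rfl⟩
      exact ⟨hzQ.2, z.1, hzQ.1, by rwa [Prod.mk.eta]⟩
  -- final conversion of goal
  have hGoalInt : (∫⁻ x in Q, ENNReal.ofReal (‖g x‖ ^ p)) = ∫⁻ z, (G z) ^ p ∂(μ.prod ν) := by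
    rw [hQmeas]
    refine lintegral_congr fun z => ?_
    exact (ENNReal.ofReal_rpow_of_nonneg (norm_nonneg _) (by linarith)).symm
  have harith : ENNReal.ofReal (min δ 1 * (1/3 : ℝ) ^ p * l ^ (2 - p)) =
      ENNReal.ofReal ((1/3 : ℝ) ^ p * l ^ (1 - p)) * ENNReal.ofReal (δ * l) := by
    rw [← ENNReal.ofReal_mul (by positivity)]
    congr 1
    rw [min_eq_left hδ1]
    have hll : l ^ ((1:ℝ) - p) * l = l ^ ((2:ℝ) - p) := by
      rw [show (2:ℝ) - p = (1 - p) + 1 by ring, Real.rpow_add hl, Real.rpow_one]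
    rw [← hll]; ring
  rw [hGoalInt, harith]
  -- case on which axis A₀ projects richly
  rcases le_max_iff.mp hmax₀ with h₀ | h₀
  · -- A₀ fst-rich : apply master_left directly
    have h₁' : (∃ S, ENNReal.ofReal (δ * l) ≤ μ S ∧
          ∀ x ∈ S, x ∈ I₁ ∧ ∃ y ∈ I₂, 1 ≤ u (x, y)) ∨
        (∃ T, ENNReal.ofReal (δ * l) ≤ ν T ∧
          ∀ y ∈ T, y ∈ I₂ ∧ ∃ x ∈ I₁, 1 ≤ u (x, y)) := by
      rcases le_max_iff.mp hmax₁ with h₁ | h₁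
      · exact Or.inl (hproj_fst (fun z => 1 ≤ u z) h₁)
      · exact Or.inr (hproj_snd (fun z => 1 ≤ u z) h₁)
    exact master_left μ ν p δ l hp1 hδ hδ1 hl hμu hνu (fun x y => u (x, y)) G hG hGfin
      I₁ I₂ (ae_restrict_mem measurableSet_Icc) (ae_restrict_mem measurableSet_Icc)
      Hv Hh (hproj_fst (fun z => u z ≤ 0) h₀) h₁'
  · -- A₀ snd-rich : apply master_left to the swapped data
    have hGs : AEMeasurable (fun z => G (Prod.swap z)) (ν.prod μ) :=
      hG.comp_quasiMeasurePreserving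
        (Measure.measurePreserving_swap).quasiMeasurePreserving
    have hGsfin : ∫⁻ z, G (Prod.swap z) ∂(ν.prod μ) ≠ ⊤ := by
      rw [show (fun z : ℝ × ℝ => G (Prod.swap z)) = fun z : ℝ × ℝ => G z.swap from rfl,
        MeasureTheory.lintegral_prod_swap G]
      exact hGfin
    have h₁' : (∃ S, ENNReal.ofReal (δ * l) ≤ ν S ∧
          ∀ y ∈ S, y ∈ I₂ ∧ ∃ x ∈ I₁, 1 ≤ u (x, y)) ∨
        (∃ T, ENNReal.ofReal (δ * l) ≤ μ T ∧
          ∀ x ∈ T, x ∈ I₁ ∧ ∃ y ∈ I₂, 1 ≤ u (x, y)) := by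
      rcases le_max_iff.mp hmax₁ with h₁ | h₁
      · exact Or.inr (hproj_fst (fun z => 1 ≤ u z) h₁)
      · exact Or.inl (hproj_snd (fun z => 1 ≤ u z) h₁)
    have key := master_left ν μ p δ l hp1 hδ hδ1 hl hνu hμu (fun y x => u (x, y))
      (fun z => G (Prod.swap z)) hGs hGsfin
      I₂ I₁ (ae_restrict_mem measurableSet_Icc) (ae_restrict_mem measurableSet_Icc)
      Hh Hv (hproj_snd (fun z => u z ≤ 0) h₀) h₁'
    rw [← MeasureTheory.lintegral_prod_swap (fun z => G z ^ p)]
    exact key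
end

section
/- Let Ω ⊂ ℝ² be a bounded simply connected domain and 1 < p < 2. Suppose that for every pair z₁, z₂ ∈ ℝ² \ Ω there exists a curve γ_n ⊂ ℝ² \ Ω_n (for each n in a sequence of open sets Ω_n ⊂ Ω with ∩_n (ℝ²\Ω_n) = ℝ²\Ω and Ω_n → Ω) joining z₁ and z₂ with ∫_{γ_n} dist(z, ∂Ω_n)^{1-p} ds(z) ≤ C|z₁−z₂|^{2-p} and ℓ(γ_n) ≤ M uniformly. Then there exists a 1-Lipschitz curve γ : [0, M] → ℝ² \ Ω joining z₁ and z₂ such that ∫_γ dist(z, ∂Ω)^{1-p} ds(z) ≤ C|z₁−z₂|^{2-p}. -/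
set_option maxHeartbeats 1000000
set_option synthInstance.maxHeartbeats 200000

open Metric MeasureTheory Set Filter Topology BoundedContinuousFunction

private lemma meas_rpow_const (c : ℝ) : Measurable fun x : ℝ => x ^ c := by
  measurability

private lemma norm_deriv_le_one' {f : ℝ → ℂ} (hf : LipschitzWith 1 f) (t : ℝ) :
    ‖deriv f t‖ ≤ 1 := by
  by_cases h : DifferentiableAt ℝ f t
  · have h' := h.hasDerivAt
    rw [hasDerivAt_iff_tendsto_slope] at h'
    have hn : Tendsto (fun s => ‖slope f t s‖) (𝓝[≠] t) (𝓝 ‖deriv f t‖) :=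
      (continuous_norm.tendsto _).comp h'
    refine le_of_tendsto hn ?_
    filter_upwards [self_mem_nhdsWithin] with s hs
    have hst : s ≠ t := hs
    have h2 : (0:ℝ) < |s - t| := abs_pos.2 (sub_ne_zero.2 hst)
    have h1 : ‖f s - f t‖ ≤ |s - t| := by
      have := hf.dist_le_mul s t
      simpa [dist_eq_norm, Real.dist_eq] using this
    rw [slope_def_module, norm_smul, norm_inv, Real.norm_eq_abs]
    calc |s - t|⁻¹ * ‖f s - f t‖ ≤ |s - t|⁻¹ * |s - t| := by
          exact mul_le_mul_of_nonneg_left h1 (inv_nonneg.2 h2.le)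
      _ = 1 := inv_mul_cancel₀ h2.ne'
  · rw [deriv_zero_of_not_differentiableAt h]; simp

/-- Compactness of curves satisfying the weighted distance condition for an
increasing exhaustion `Ω_n → Ω`: arc-length parametrized curves `γ_n ⊂ ℝ² \ Ω_n` of length
at most `M` joining `z₁, z₂` with uniform weighted integral bounds have a 1-Lipschitz limit
curve `γ : [0,M] → ℝ² \ Ω` joining `z₁, z₂` and satisfying the same bound for `Ω`. -/
theorem stmt7 (p C M : ℝ) (hp1 : 1 < p) (hp2 : p < 2) (hC : 0 < C) (hM : 0 < M)
    (Ω : Set ℂ) (hΩo : IsOpen Ω) (hΩc : IsConnected Ω) (hΩb : Bornology.IsBounded Ω)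
    (hsc : SimplyConnectedSpace ↥Ω)
    (z₁ z₂ : ℂ) (hz₁ : z₁ ∉ Ω) (hz₂ : z₂ ∉ Ω)
    (Ωs : ℕ → Set ℂ) (hopen : ∀ n, IsOpen (Ωs n)) (hsub : ∀ n, Ωs n ⊆ Ω)
    (hmono : Monotone Ωs)
    (hinter : (⋂ n, (Ωs n)ᶜ) = Ωᶜ)
    (hconv : Tendsto (fun n => Metric.hausdorffDist (frontier (Ωs n)) (frontier Ω))
      atTop (nhds 0))
    (L : ℕ → ℝ) (γs : ℕ → ℝ → ℂ)
    (hL0 : ∀ n, 0 ≤ L n) (hLM : ∀ n, L n ≤ M)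
    (hstart : ∀ n, γs n 0 = z₁)
    (hend : ∀ n, ∀ t : ℝ, L n ≤ t → γs n t = z₂)
    (hlip : ∀ n, LipschitzOnWith 1 (γs n) (Set.Icc 0 (L n)))
    (harc : ∀ n, eVariationOn (γs n) (Set.Icc 0 (L n)) = ENNReal.ofReal (L n))
    (havoid : ∀ n, ∀ t ∈ Set.Icc (0:ℝ) (L n), γs n t ∉ Ωs n)
    (hint : ∀ n,
      (∫⁻ t in Set.Ioc (0:ℝ) (L n),
        ENNReal.ofReal ((Metric.infDist (γs n t) (frontier (Ωs n))) ^ (1 - p)))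
      ≤ ENNReal.ofReal (C * dist z₁ z₂ ^ (2 - p))) :
    ∃ γ : ℝ → ℂ, LipschitzOnWith 1 γ (Set.Icc 0 M) ∧ γ 0 = z₁ ∧ γ M = z₂ ∧
      (∀ t ∈ Set.Icc (0:ℝ) M, γ t ∉ Ω) ∧
      (∫⁻ t in Set.Ioc (0:ℝ) M,
        ENNReal.ofReal ((Metric.infDist (γ t) (frontier Ω)) ^ (1 - p) * ‖deriv γ t‖))
      ≤ ENNReal.ofReal (C * dist z₁ z₂ ^ (2 - p)) := by
  have hM0 : (0:ℝ) ≤ M := hM.le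
  -- ordered distance estimate
  have hkey : ∀ n, ∀ x ∈ Icc (0:ℝ) M, ∀ y ∈ Icc (0:ℝ) M, x ≤ y →
      dist (γs n x) (γs n y) ≤ y - x := by
    intro n x hx y hy hxy
    by_cases hyL : y ≤ L n
    · have := (hlip n).dist_le_mul x ⟨hx.1, le_trans hxy hyL⟩ y ⟨le_trans hx.1 hxy, hyL⟩
      simpa [Real.dist_eq, abs_of_nonpos (sub_nonpos.2 hxy)] using this
    · push_neg at hyL
      by_cases hxL : L n ≤ x
      · rw [hend n x hxL, hend n y hyL.le]
        simpa using sub_nonneg.2 hxy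
      · push_neg at hxL
        have h1 : γs n y = γs n (L n) := by
          rw [hend n y hyL.le, hend n (L n) le_rfl]
        rw [h1]
        have := (hlip n).dist_le_mul x ⟨hx.1, hxL.le⟩ (L n) ⟨hL0 n, le_rfl⟩
        have h2 : dist (γs n x) (γs n (L n)) ≤ L n - x := by
          simpa [Real.dist_eq, abs_of_nonpos (sub_nonpos.2 hxL.le)] using this
        linarith
  have hlipM : ∀ n, LipschitzOnWith 1 (γs n) (Icc 0 M) := by
    intro n
    apply LipschitzOnWith.of_dist_le_mul
    intro x hx y hy
    rcases le_total x y with h | h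
    · calc dist (γs n x) (γs n y) ≤ y - x := hkey n x hx y hy h
        _ ≤ 1 * dist x y := by rw [Real.dist_eq, abs_of_nonpos (sub_nonpos.2 h)]; push_cast; linarith
    · calc dist (γs n x) (γs n y) = dist (γs n y) (γs n x) := dist_comm _ _
        _ ≤ x - y := hkey n y hy x hx h
        _ ≤ 1 * dist x y := by rw [Real.dist_eq, abs_of_nonneg (sub_nonneg.2 h)]; push_cast; linarith
  have hmemball : ∀ n, ∀ t ∈ Icc (0:ℝ) M, γs n t ∈ closedBall z₁ M := by
    intro n t ht
    have := hkey n 0 ⟨le_rfl, hM0⟩ t ht ht.1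
    rw [hstart n] at this
    rw [mem_closedBall, dist_comm]
    calc dist z₁ (γs n t) = dist (γs n t) z₁ := dist_comm _ _
      _ ≤ t - 0 := by rw [dist_comm]; exact this
      _ ≤ M := by linarith [ht.2]
  have havoidM : ∀ n, ∀ t ∈ Icc (0:ℝ) M, γs n t ∉ Ωs n := by
    intro n t ht
    by_cases h : t ≤ L n
    · exact havoid n t ⟨ht.1, h⟩
    · rw [hend n t (le_of_not_ge h)]
      exact fun hm => hz₂ (hsub n hm)
  -- extract convergent subsequence of lengths
  obtain ⟨Lstar, hLsmem, ψ, hψ, hLψ⟩ :=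
    (isCompact_Icc (a := (0:ℝ)) (b := M)).tendsto_subseq (x := L) (fun n => ⟨hL0 n, hLM n⟩)
  -- bounded continuous functions
  let F : ℕ → (Icc (0:ℝ) M →ᵇ ℂ) := fun n =>
    BoundedContinuousFunction.mkOfCompact
      ⟨(Icc (0:ℝ) M).restrict (γs (ψ n)), ((hlipM (ψ n)).to_restrict).continuous⟩
  have hFlip : ∀ n, LipschitzWith 1 (F n) := fun n => (hlipM (ψ n)).to_restrict
  have hcomp : IsCompact (closure (Set.range F)) := by
    apply BoundedContinuousFunction.arzela_ascoli (closedBall z₁ M) (isCompact_closedBall _ _)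
    · rintro f x ⟨n, rfl⟩
      exact hmemball (ψ n) x x.2
    · apply Metric.equicontinuous_of_continuity_modulus (fun d => d) tendsto_id
      rintro x y ⟨f, ⟨n, rfl⟩⟩
      simpa using (hFlip n).dist_le_mul x y
  obtain ⟨f, hfmem, φ, hφ, hfconv⟩ :=
    hcomp.tendsto_subseq (x := F) (fun n => subset_closure ⟨n, rfl⟩)
  set σ : ℕ → ℕ := fun n => ψ (φ n) with hσdef
  have hσmono : StrictMono σ := hψ.comp hφ
  have hLσ : Tendsto (fun n => L (σ n)) atTop (𝓝 Lstar) := hLψ.comp hφ.tendsto_atTop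
  have hpt0 : ∀ x : Icc (0:ℝ) M, Tendsto (fun n => γs (σ n) x) atTop (𝓝 (f x)) := by
    intro x
    apply tendsto_iff_dist_tendsto_zero.2
    apply squeeze_zero (fun n => dist_nonneg)
      (fun n => BoundedContinuousFunction.dist_coe_le_dist (f := F (φ n)) (g := f) x)
    exact tendsto_iff_dist_tendsto_zero.1 hfconv
  set γ : ℝ → ℂ := fun t => f (projIcc 0 M hM0 t) with hγdef
  have hγt : ∀ t (ht : t ∈ Icc (0:ℝ) M), γ t = f ⟨t, ht⟩ := by
    intro t ht
    simp only [hγdef, projIcc_of_mem hM0 ht]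
  have hγlip : LipschitzWith 1 γ := by
    have h1 : LipschitzWith 1 (f : Icc (0:ℝ) M → ℂ) := by
      apply LipschitzWith.of_dist_le_mul
      intro x y
      have hT : Tendsto (fun n => dist (γs (σ n) x) (γs (σ n) y)) atTop
          (𝓝 (dist (f x) (f y))) := (hpt0 x).dist (hpt0 y)
      apply le_of_tendsto hT
      apply Eventually.of_forall
      intro n
      have := (hlipM (σ n)).dist_le_mul x x.2 y y.2
      simpa [Subtype.dist_eq] using this
    have := h1.comp (LipschitzWith.projIcc hM0)
    rw [one_mul] at this
    exact this
  have hγ0 : γ 0 = z₁ := by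
    rw [hγt 0 (left_mem_Icc.2 hM0)]
    refine tendsto_nhds_unique (hpt0 ⟨0, left_mem_Icc.2 hM0⟩) ?_
    simpa [hstart] using (tendsto_const_nhds : Tendsto (fun _ : ℕ => z₁) atTop (𝓝 z₁))
  have hγM : γ M = z₂ := by
    rw [hγt M (right_mem_Icc.2 hM0)]
    refine tendsto_nhds_unique (hpt0 ⟨M, right_mem_Icc.2 hM0⟩) ?_
    have : ∀ n, γs (σ n) M = z₂ := fun n => hend (σ n) M (hLM (σ n))
    simpa [this] using (tendsto_const_nhds : Tendsto (fun _ : ℕ => z₂) atTop (𝓝 z₂))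
  have hγavoid : ∀ t ∈ Icc (0:ℝ) M, γ t ∉ Ω := by
    intro t ht
    have hmemc : γ t ∈ ⋂ m, (Ωs m)ᶜ := by
      refine mem_iInter.2 fun m => ?_
      rw [hγt t ht]
      refine (hopen m).isClosed_compl.mem_of_tendsto (hpt0 ⟨t, ht⟩) ?_
      filter_upwards [eventually_ge_atTop m] with n hn
      have hmn : m ≤ σ n := le_trans hn hσmono.le_apply
      exact fun hx => havoidM (σ n) t ht (hmono hmn hx)
    rw [hinter] at hmemc
    exact hmemc
  have hγconst : ∀ s, Lstar < s → γ s = z₂ := by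
    intro s hs
    rcases le_or_gt s M with hsM | hsM
    · have hsmem : s ∈ Icc (0:ℝ) M := ⟨le_trans hLsmem.1 hs.le, hsM⟩
      rw [hγt s hsmem]
      refine tendsto_nhds_unique (hpt0 ⟨s, hsmem⟩) ?_
      refine Tendsto.congr' ?_ (tendsto_const_nhds : Tendsto (fun _ : ℕ => z₂) atTop (𝓝 z₂))
      filter_upwards [hLσ (Iio_mem_nhds hs)] with n hn
      exact (hend (σ n) s (le_of_lt hn)).symm
    · have : projIcc 0 M hM0 s = ⟨M, right_mem_Icc.2 hM0⟩ := projIcc_of_right_le hM0 hsM.le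
      rw [hγdef]
      simp only [this]
      rw [← hγt M (right_mem_Icc.2 hM0)]
      exact hγM
  -- nonemptiness facts
  have hΩne : Ω.Nonempty := hΩc.nonempty
  obtain ⟨N, hNne⟩ : ∃ N, (Ωs N).Nonempty := by
    by_contra h
    push_neg at h
    have hall : ∀ n, Ωs n = ∅ := h
    have : (⋂ n, (Ωs n)ᶜ) = (univ : Set ℂ) := by simp [hall]
    rw [hinter] at this
    obtain ⟨x, hx⟩ := hΩne
    have : x ∈ Ωᶜ := this ▸ mem_univ x
    exact this hx
  have hproper : ∀ s : Set ℂ, s ⊆ Ω → s ≠ univ := by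
    intro s hsΩ hequniv
    obtain ⟨R, hR⟩ := (isBounded_iff_subset_closedBall (0:ℂ)).1 hΩb
    have hmem : ((R+1:ℝ):ℂ) ∈ closedBall (0:ℂ) R := hR (hsΩ (hequniv ▸ mem_univ _))
    rw [mem_closedBall, dist_zero_right] at hmem
    have : ‖((R+1:ℝ):ℂ)‖ = |R+1| := by
      rw [Complex.norm_real, Real.norm_eq_abs]
    rw [this] at hmem
    have := le_abs_self (R+1)
    linarith
  have hfront : ∀ s : Set ℂ, IsOpen s → s.Nonempty → s ⊆ Ω → (frontier s).Nonempty := by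
    intro s ho hne hsΩ
    rw [nonempty_iff_ne_empty]
    intro hfe
    have hclopen : IsClopen s := isClopen_iff_frontier_eq_empty.2 hfe
    rcases isClopen_iff.1 hclopen with h | h
    · exact (nonempty_iff_ne_empty.1 hne) h
    · exact hproper s hsΩ h
  have hfrontΩ : (frontier Ω).Nonempty := hfront Ω hΩo hΩne subset_rfl
  have hbddfr : ∀ s : Set ℂ, s ⊆ Ω → Bornology.IsBounded (frontier s) := by
    intro s h
    exact hΩb.closure.subset (frontier_subset_closure.trans (closure_mono h))
  have hhne : ∀ n, N ≤ n → EMetric.hausdorffEdist (frontier (Ωs n)) (frontier Ω) ≠ ⊤ := by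
    intro n hn
    exact hausdorffEdist_ne_top_of_nonempty_of_bounded
      (hfront _ (hopen n) (hNne.mono (hmono hn)) (hsub n)) hfrontΩ
      (hbddfr _ (hsub n)) (hbddfr _ subset_rfl)
  -- the sequence of integrands
  set g : ℕ → ℝ → ENNReal := fun n t =>
    ENNReal.ofReal ((infDist (γs (σ n) t) (frontier (Ωs (σ n)))) ^ (1 - p)) with hgdef
  set fseq : ℕ → ℝ → ENNReal := fun n => (Ioc (0:ℝ) (L (σ n))).indicator (g n) with hfseqdef
  have hfmeas : ∀ n, AEMeasurable (fseq n) (volume.restrict (Ioc (0:ℝ) M)) := by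
    intro n
    rw [hfseqdef]
    rw [aemeasurable_indicator_iff measurableSet_Ioc]
    have hγcont : ContinuousOn (γs (σ n)) (Ioc 0 (L (σ n))) :=
      ((hlip (σ n)).continuousOn).mono Ioc_subset_Icc_self
    have hγae : AEMeasurable (γs (σ n))
        ((volume.restrict (Ioc (0:ℝ) M)).restrict (Ioc (0:ℝ) (L (σ n)))) := by
      have h1 := hγcont.aemeasurable (μ := volume) measurableSet_Ioc
      apply h1.mono_measure
      rw [Measure.restrict_restrict measurableSet_Ioc]
      exact Measure.restrict_mono inter_subset_left le_rfl
    exact ENNReal.measurable_ofReal.comp_aemeasurable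
      ((meas_rpow_const (1-p)).comp_aemeasurable
        (((continuous_infDist_pt _).measurable).comp_aemeasurable hγae))
  have hfint : ∀ n, (∫⁻ t in Ioc (0:ℝ) M, fseq n t)
      ≤ ENNReal.ofReal (C * dist z₁ z₂ ^ (2 - p)) := by
    intro n
    rw [hfseqdef]
    rw [lintegral_indicator measurableSet_Ioc]
    rw [Measure.restrict_restrict measurableSet_Ioc]
    rw [inter_eq_left.2 (Ioc_subset_Ioc_right (hLM (σ n)))]
    exact hint (σ n)
  -- a.e. pointwise inequality
  have hae : ∀ᵐ t ∂(volume.restrict (Ioc (0:ℝ) M)),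
      ENNReal.ofReal ((infDist (γ t) (frontier Ω)) ^ (1 - p) * ‖deriv γ t‖)
        ≤ liminf (fun n => fseq n t) atTop := by
    have hLne : ∀ᵐ t ∂(volume.restrict (Ioc (0:ℝ) M)), t ≠ Lstar := by
      refine ae_iff.2 ?_
      have hset : {t : ℝ | ¬ t ≠ Lstar} = {Lstar} := by ext x; simp
      rw [hset]
      refine le_antisymm ?_ (zero_le)
      calc (volume.restrict (Ioc (0:ℝ) M)) {Lstar} ≤ volume {Lstar} :=
            Measure.restrict_apply_le _ _
        _ = 0 := Real.volume_singleton
    filter_upwards [hLne, self_mem_ae_restrict measurableSet_Ioc] with t htne htIoc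
    rcases lt_or_gt_of_ne htne with htlt | htgt
    · -- t < Lstar
      have htmem : t ∈ Icc (0:ℝ) M := ⟨htIoc.1.le, htIoc.2⟩
      have hwn : Tendsto (fun n => γs (σ n) t) atTop (𝓝 (γ t)) := by
        rw [hγt t htmem]
        exact hpt0 ⟨t, htmem⟩
      have hd1 : (infDist (γ t) (frontier Ω)) ^ (1-p) * ‖deriv γ t‖
          ≤ (infDist (γ t) (frontier Ω)) ^ (1-p) :=
        mul_le_of_le_one_right (Real.rpow_nonneg infDist_nonneg _) (norm_deriv_le_one' hγlip t)
      refine le_trans (ENNReal.ofReal_le_ofReal hd1) ?_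
      have hev : ∀ᶠ n in atTop, fseq n t = g n t := by
        filter_upwards [hLσ (Ioi_mem_nhds htlt)] with n hn
        exact Set.indicator_of_mem (show t ∈ Ioc (0:ℝ) (L (σ n)) from ⟨htIoc.1, le_of_lt hn⟩) (g n)
      rw [liminf_congr hev]
      by_cases hd0 : infDist (γ t) (frontier Ω) = 0
      · simp [hd0, Real.zero_rpow (show (1:ℝ) - p ≠ 0 by linarith)]
      · have hdpos : 0 < infDist (γ t) (frontier Ω) :=
          lt_of_le_of_ne infDist_nonneg (Ne.symm hd0)
        have hσN : ∀ᶠ n in atTop, N ≤ σ n :=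
          eventually_atTop.2 ⟨N, fun n hn => le_trans hn hσmono.le_apply⟩
        have hH : Tendsto (fun n => hausdorffDist (frontier (Ωs (σ n))) (frontier Ω))
            atTop (𝓝 0) := hconv.comp hσmono.tendsto_atTop
        have hinfΩ : Tendsto (fun n => infDist (γs (σ n) t) (frontier Ω)) atTop
            (𝓝 (infDist (γ t) (frontier Ω))) :=
          ((continuous_infDist_pt _).tendsto _).comp hwn
        have hdtend : Tendsto (fun n => infDist (γs (σ n) t) (frontier (Ωs (σ n)))) atTop
            (𝓝 (infDist (γ t) (frontier Ω))) := by
          have hlow : ∀ᶠ n in atTop,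
              infDist (γs (σ n) t) (frontier Ω)
                - hausdorffDist (frontier (Ωs (σ n))) (frontier Ω)
              ≤ infDist (γs (σ n) t) (frontier (Ωs (σ n))) := by
            filter_upwards [hσN] with n hn
            have := infDist_le_infDist_add_hausdorffDist
              (x := γs (σ n) t) (s := frontier (Ωs (σ n))) (t := frontier Ω) (hhne _ hn)
            linarith
          have hup : ∀ᶠ n in atTop,
              infDist (γs (σ n) t) (frontier (Ωs (σ n)))
              ≤ infDist (γs (σ n) t) (frontier Ω)
                + hausdorffDist (frontier (Ωs (σ n))) (frontier Ω) := by
            filter_upwards [hσN] with n hn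
            have h1 := infDist_le_infDist_add_hausdorffDist
              (x := γs (σ n) t) (s := frontier Ω) (t := frontier (Ωs (σ n)))
              (by rw [EMetric.hausdorffEdist_comm]; exact hhne _ hn)
            rw [hausdorffDist_comm] at h1
            linarith
          have hlimlow : Tendsto (fun n => infDist (γs (σ n) t) (frontier Ω)
              - hausdorffDist (frontier (Ωs (σ n))) (frontier Ω)) atTop
              (𝓝 (infDist (γ t) (frontier Ω))) := by
            have := hinfΩ.sub hH
            simpa using this
          have hlimup : Tendsto (fun n => infDist (γs (σ n) t) (frontier Ω)
              + hausdorffDist (frontier (Ωs (σ n))) (frontier Ω)) atTop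
              (𝓝 (infDist (γ t) (frontier Ω))) := by
            have := hinfΩ.add hH
            simpa using this
          exact tendsto_of_tendsto_of_tendsto_of_le_of_le' hlimlow hlimup hlow hup
        have hcont : ContinuousAt (fun x : ℝ => x ^ (1-p)) (infDist (γ t) (frontier Ω)) :=
          Real.continuousAt_rpow_const _ _ (Or.inl hdpos.ne')
        have hgt : Tendsto (fun n => g n t) atTop
            (𝓝 (ENNReal.ofReal ((infDist (γ t) (frontier Ω)) ^ (1-p)))) :=
          (ENNReal.continuous_ofReal.tendsto _).comp (hcont.tendsto.comp hdtend)
        rw [hgt.liminf_eq]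
    · -- t > Lstar
      have hderiv : deriv γ t = 0 := by
        have hev : γ =ᶠ[𝓝 t] fun _ => z₂ := by
          filter_upwards [Ioi_mem_nhds htgt] with s hs
          exact hγconst s hs
        rw [hev.deriv_eq, deriv_const]
      simp [hderiv]
  refine ⟨γ, hγlip.lipschitzOnWith, hγ0, hγM, hγavoid, ?_⟩
  calc (∫⁻ t in Ioc (0:ℝ) M,
        ENNReal.ofReal ((infDist (γ t) (frontier Ω)) ^ (1 - p) * ‖deriv γ t‖))
      ≤ ∫⁻ t in Ioc (0:ℝ) M, liminf (fun n => fseq n t) atTop := lintegral_mono_ae hae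
    _ ≤ liminf (fun n => ∫⁻ t in Ioc (0:ℝ) M, fseq n t) atTop := lintegral_liminf_le' hfmeas
    _ ≤ ENNReal.ofReal (C * dist z₁ z₂ ^ (2 - p)) := by
        refine le_trans (liminf_le_liminf (Eventually.of_forall hfint)) ?_
        simp [liminf_const]
end

section
/- Let Ω ⊂ ℝ² be a bounded Jordan John domain with John constant J and John center x₀, let φ : 𝔻 → Ω be a conformal map with φ(0) = x₀ that is η-quasisymmetric with respect to the inner distance of Ω. Let A ⊂ 𝔻 be a set containing a disk B(z₀, c₀·diam(A)) with c₀ ≤ 1 absolute. Then there exists c = c(J, c₀) ∈ (0,1) such that the inner metric ball B_Ω(φ(z₀), c·diam_Ω(φ(A))) is contained in φ(A). -/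
open Metric MeasureTheory Set

noncomputable section

/-- A Jordan domain: a bounded connected open set whose boundary is a Jordan curve. -/
def IsJordanDomain (Ω : Set ℂ) : Prop :=
  IsOpen Ω ∧ Bornology.IsBounded Ω ∧ IsConnected Ω ∧
    ∃ γ : AddCircle (1:ℝ) → ℂ, Continuous γ ∧ Function.Injective γ ∧
      Set.range γ = frontier Ω

/-- A `J`-John domain with distinguished point `x₀`. -/
def IsJohnDomain (J : ℝ) (Ω : Set ℂ) (x₀ : ℂ) : Prop :=
  x₀ ∈ Ω ∧ ∀ x ∈ Ω, ∃ (L : ℝ) (γ : ℝ → ℂ), 0 ≤ L ∧ γ 0 = x ∧ γ L = x₀ ∧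
    LipschitzOnWith 1 γ (Set.Icc 0 L) ∧
    ∀ t ∈ Set.Icc (0:ℝ) L, γ t ∈ Ω ∧ J * t ≤ Metric.infDist (γ t) Ωᶜ

/-- The inner distance in `Ω`. -/
def innerDist (Ω : Set ℂ) (x y : ℂ) : ℝ :=
  sInf {L : ℝ | 0 ≤ L ∧ ∃ γ : ℝ → ℂ, γ 0 = x ∧ γ L = y ∧
    (∀ t ∈ Set.Icc (0:ℝ) L, γ t ∈ Ω) ∧ LipschitzOnWith 1 γ (Set.Icc 0 L)}

/-- The inner diameter of `S` with respect to `Ω`. -/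
def innerDiam (Ω S : Set ℂ) : ℝ :=
  sSup {d : ℝ | ∃ x ∈ S, ∃ y ∈ S, d = innerDist Ω x y}

lemma innerDist_nonneg (Ω : Set ℂ) (x y : ℂ) : 0 ≤ innerDist Ω x y :=
  Real.sInf_nonneg (fun _ hL => hL.1)

lemma innerDist_set_subset (Ω : Set ℂ) (x y : ℂ) :
    {L : ℝ | 0 ≤ L ∧ ∃ γ : ℝ → ℂ, γ 0 = x ∧ γ L = y ∧
      (∀ t ∈ Set.Icc (0:ℝ) L, γ t ∈ Ω) ∧ LipschitzOnWith 1 γ (Set.Icc 0 L)} ⊆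
    {L : ℝ | 0 ≤ L ∧ ∃ γ : ℝ → ℂ, γ 0 = y ∧ γ L = x ∧
      (∀ t ∈ Set.Icc (0:ℝ) L, γ t ∈ Ω) ∧ LipschitzOnWith 1 γ (Set.Icc 0 L)} := by
  rintro L ⟨hL, γ, h0, hLy, hmem, hlip⟩
  refine ⟨hL, fun t => γ (L - t), by simp [hLy], by simp [h0], ?_, ?_⟩
  · intro t ht
    exact hmem (L - t) ⟨by linarith [ht.2], by linarith [ht.1]⟩
  · rw [lipschitzOnWith_iff_dist_le_mul] at hlip ⊢
    intro s hs t ht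
    have h := hlip (L - s) ⟨by linarith [hs.2], by linarith [hs.1]⟩
      (L - t) ⟨by linarith [ht.2], by linarith [ht.1]⟩
    have heq : dist (L - s) (L - t) = dist s t := by
      rw [Real.dist_eq, Real.dist_eq, show L - s - (L - t) = -(s - t) by ring, abs_neg]
    rw [heq] at h
    exact h

lemma innerDist_symm (Ω : Set ℂ) (x y : ℂ) : innerDist Ω x y = innerDist Ω y x := by
  unfold innerDist
  congr 1
  exact Set.Subset.antisymm (innerDist_set_subset Ω x y) (innerDist_set_subset Ω y x)

lemma innerDist_self (Ω : Set ℂ) (x : ℂ) (hx : x ∈ Ω) : innerDist Ω x x = 0 := by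
  refine le_antisymm ?_ (innerDist_nonneg Ω x x)
  apply csInf_le ⟨0, fun _ hL => hL.1⟩
  refine ⟨le_refl 0, fun _ => x, rfl, rfl, fun _ _ => hx, ?_⟩
  rw [lipschitzOnWith_iff_dist_le_mul]
  intro s hs t ht
  simp [dist_nonneg]

/-- If `φ : 𝔻 → Ω` is a conformal map onto a Jordan John domain which is
`η`-quasisymmetric with respect to the inner distance, and `A ⊂ 𝔻` contains the disk
`B(z₀, c₀ diam A)`, then an inner metric ball `B_Ω(φ(z₀), c·diam_Ω(φ(A)))` is contained
in `φ(A)`, with `c = c(J, c₀) ∈ (0,1)`. -/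
theorem stmt11 (J c₀ : ℝ) (η : ℝ → ℝ) (hJ : 0 < J) (hc₀ : 0 < c₀) (hc₀1 : c₀ ≤ 1)
    (hη0 : ∀ t, 0 ≤ t → 0 ≤ η t) (hηmono : MonotoneOn η (Set.Ici 0)) :
    ∃ c : ℝ, 0 < c ∧ c < 1 ∧
      ∀ (Ω : Set ℂ) (x₀ : ℂ) (φ : ℂ → ℂ) (A : Set ℂ) (z₀ : ℂ),
        IsJordanDomain Ω → IsJohnDomain J Ω x₀ →
        DifferentiableOn ℂ φ (Metric.ball 0 1) → Set.InjOn φ (Metric.ball 0 1) →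
        φ '' Metric.ball 0 1 = Ω → φ 0 = x₀ →
        (∀ z x y : ℂ, z ∈ Metric.ball (0:ℂ) 1 → x ∈ Metric.ball (0:ℂ) 1 →
          y ∈ Metric.ball (0:ℂ) 1 → ∀ t : ℝ, 0 ≤ t → dist z x ≤ t * dist y x →
            innerDist Ω (φ z) (φ x) ≤ η t * innerDist Ω (φ y) (φ x)) →
        A ⊆ Metric.ball 0 1 → A.Nonempty →
        Metric.ball z₀ (c₀ * Metric.diam A) ⊆ A →
        {y | y ∈ Ω ∧ innerDist Ω (φ z₀) y < c * innerDiam Ω (φ '' A)} ⊆ φ '' A := by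
  have hη2 : 0 ≤ η 2 := hη0 2 (by norm_num)
  have hη4 : 0 ≤ η 4 := hη0 4 (by norm_num)
  have hηc : 0 ≤ η (1 / c₀) := hη0 _ (by positivity)
  set P : ℝ := η 2 * (η 4 * η (1 / c₀)) with hPdef
  have hP : 0 ≤ P := by positivity
  refine ⟨1 / (P + 2), by positivity, ?_, ?_⟩
  · rw [div_lt_one (by linarith)]; linarith
  intro Ω x₀ φ A z₀ _hJor _hJohn _hdiff _hinj himg _hφ0 hQS hA hAne hball
  intro y hy
  obtain ⟨hyΩ, hylt⟩ := hy
  rw [← himg] at hyΩ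
  obtain ⟨w, hw, rfl⟩ := hyΩ
  set D : ℝ := innerDiam Ω (φ '' A) with hDdef
  have hc : (0:ℝ) < 1 / (P + 2) := by positivity
  have hI0 : 0 ≤ innerDist Ω (φ z₀) (φ w) := innerDist_nonneg _ _ _
  have hD0 : 0 < D := by nlinarith
  have hbd : Bornology.IsBounded A := Metric.isBounded_ball.subset hA
  -- the diameter of A is positive
  have hdA : 0 < Metric.diam A := by
    rcases lt_or_ge 0 (Metric.diam A) with h | h
    · exact h
    exfalso
    obtain ⟨a, ha⟩ := hAne
    have haΩ : φ a ∈ Ω := by rw [← himg]; exact ⟨a, hA ha, rfl⟩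
    have hsingle : ∀ b ∈ A, b = a := by
      intro b hb
      have := Metric.dist_le_diam_of_mem hbd hb ha
      have : dist b a ≤ 0 := le_trans this h
      have : dist b a = 0 := le_antisymm this dist_nonneg
      exact dist_eq_zero.mp this
    have hDle : D ≤ 0 := by
      apply Real.sSup_le _ le_rfl
      rintro d ⟨x, ⟨a', ha', rfl⟩, yy, ⟨b', hb', rfl⟩, rfl⟩
      rw [hsingle a' ha', hsingle b' hb', innerDist_self Ω (φ a) haΩ]
    linarith
  have hz₀A : z₀ ∈ A := hball (mem_ball_self (by positivity))
  have hz₀b : z₀ ∈ Metric.ball (0:ℂ) 1 := hA hz₀A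
  -- find a point u ∈ A far from z₀
  obtain ⟨u, huA, hu⟩ : ∃ u ∈ A, Metric.diam A / 4 < dist u z₀ := by
    by_contra hcon
    push_neg at hcon
    have : Metric.diam A ≤ Metric.diam A / 2 := by
      apply Metric.diam_le_of_forall_dist_le (by linarith)
      intro a ha b hb
      calc dist a b ≤ dist a z₀ + dist z₀ b := dist_triangle _ _ _
        _ ≤ Metric.diam A / 4 + Metric.diam A / 4 := by
            have h1 := hcon a ha
            have h2 := hcon b hb
            rw [dist_comm z₀ b]; linarith
        _ = Metric.diam A / 2 := by ring
    linarith
  have hub : u ∈ Metric.ball (0:ℂ) 1 := hA huA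
  have hdiam4 : ∀ v ∈ A, dist v z₀ ≤ 4 * dist u z₀ := by
    intro v hv
    have := Metric.dist_le_diam_of_mem hbd hv hz₀A
    linarith
  set M : ℝ := innerDist Ω (φ u) (φ z₀) with hMdef
  have hM0 : 0 ≤ M := innerDist_nonneg _ _ _
  -- key bound: every inner distance between points of φ '' A is ≤ η 2 * (η 4 * M)
  have key : ∀ a ∈ A, ∀ b ∈ A, dist a b ≤ 2 * dist z₀ b →
      innerDist Ω (φ a) (φ b) ≤ η 2 * (η 4 * M) := by
    intro a ha b hb hab
    have h1 := hQS a b z₀ (hA ha) (hA hb) hz₀b 2 (by norm_num) hab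
    have h2 : innerDist Ω (φ z₀) (φ b) = innerDist Ω (φ b) (φ z₀) := innerDist_symm _ _ _
    have h3 := hQS b z₀ u (hA hb) hz₀b hub 4 (by norm_num) (hdiam4 b hb)
    calc innerDist Ω (φ a) (φ b) ≤ η 2 * innerDist Ω (φ z₀) (φ b) := h1
      _ = η 2 * innerDist Ω (φ b) (φ z₀) := by rw [h2]
      _ ≤ η 2 * (η 4 * M) := by
          apply mul_le_mul_of_nonneg_left _ hη2
          exact h3
  have hDle : D ≤ η 2 * (η 4 * M) := by
    apply Real.sSup_le _ (by positivity)
    rintro d ⟨x, ⟨a', ha', rfl⟩, yy, ⟨b', hb', rfl⟩, rfl⟩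
    rcases le_total (dist z₀ a') (dist z₀ b') with h | h
    · apply key a' ha' b' hb'
      calc dist a' b' ≤ dist a' z₀ + dist z₀ b' := dist_triangle _ _ _
        _ ≤ 2 * dist z₀ b' := by rw [dist_comm a' z₀]; linarith
    · rw [innerDist_symm]
      apply key b' hb' a' ha'
      calc dist b' a' ≤ dist b' z₀ + dist z₀ a' := dist_triangle _ _ _
        _ ≤ 2 * dist z₀ a' := by rw [dist_comm b' z₀]; linarith
  -- suppose w ∉ A, derive a contradiction
  by_contra hwnA
  have hwA : w ∉ A := fun h => hwnA ⟨w, h, rfl⟩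
  have hdw : c₀ * Metric.diam A ≤ dist w z₀ := by
    by_contra h
    push_neg at h
    exact hwA (hball (mem_ball.mpr h))
  have hMle : M ≤ η (1 / c₀) * innerDist Ω (φ w) (φ z₀) := by
    apply hQS u z₀ w hub hz₀b hw (1 / c₀) (by positivity)
    have h1 : dist u z₀ ≤ Metric.diam A := Metric.dist_le_diam_of_mem hbd huA hz₀A
    have h2 : Metric.diam A ≤ (1 / c₀) * dist w z₀ := by
      rw [one_div, inv_mul_eq_div, le_div_iff₀ hc₀]
      linarith
    linarith
  have hsym : innerDist Ω (φ w) (φ z₀) = innerDist Ω (φ z₀) (φ w) := innerDist_symm _ _ _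
  rw [hsym] at hMle
  have hPc : P * (1 / (P + 2)) < 1 := by
    rw [mul_one_div]
    rw [div_lt_one (by linarith)]
    linarith
  have h1 : D ≤ P * innerDist Ω (φ z₀) (φ w) := by
    have m1 : η 4 * M ≤ η 4 * (η (1 / c₀) * innerDist Ω (φ z₀) (φ w)) :=
      mul_le_mul_of_nonneg_left hMle hη4
    have m2 : η 2 * (η 4 * M) ≤ η 2 * (η 4 * (η (1 / c₀) * innerDist Ω (φ z₀) (φ w))) :=
      mul_le_mul_of_nonneg_left m1 hη2
    calc D ≤ η 2 * (η 4 * M) := hDle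
      _ ≤ η 2 * (η 4 * (η (1 / c₀) * innerDist Ω (φ z₀) (φ w))) := m2
      _ = P * innerDist Ω (φ z₀) (φ w) := by rw [hPdef]; ring
  have h2 : P * innerDist Ω (φ z₀) (φ w) ≤ P * (1 / (P + 2) * D) :=
    mul_le_mul_of_nonneg_left hylt.le hP
  nlinarith
end
end
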